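/- The tensor product of two almost ι-complexes is an almost ι-complex: if (C1, ῑ1) and (C2, ῑ2) are almost ι-complexes, then (C1 ⊗_{F[U]} C2, ῑ1 ⊗ ῑ2) satisfies (ῑ1⊗ῑ2)∂ + ∂(ῑ1⊗ῑ2) ∈ im U, (ῑ1⊗ῑ2)² ≃ id mod U, and U⁻¹H_*(C1⊗C2) ≅ F[U,U⁻¹]. -/

import Mathlib

open Polynomial

abbrev F2 : Type := ZMod 2
abbrev R : Type := Polynomial F2

noncomputable section

namespace AI

/-- The variable `U`. -/
def Uu : R := Polynomial.X

/-- The free `R`-module of rank `n`. -/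
abbrev V (n : ℕ) : Type := Fin n → R

/-- The `i`-th standard basis vector. -/
def e {n : ℕ} (i : Fin n) : V n := fun j => if j = i then 1 else 0

/-- The `i`-th standard basis vector over `F2`. -/
def e2 {n : ℕ} (i : Fin n) : Fin n → F2 := fun j => if j = i then 1 else 0

/-- `x` lies in the image of multiplication by `U`. -/
def modU {n : ℕ} (x : V n) : Prop := ∀ j, (x j).coeff 0 = 0

/-- `x` is homogeneous of degree `c` with respect to the generator gradings `gr`
(where `deg U = -2`). -/
def IsHomog {n : ℕ} (gr : Fin n → ℤ) (c : ℤ) (x : V n) : Prop :=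
  ∀ (j : Fin n) (m : ℕ), (x j).coeff m ≠ 0 → gr j - 2 * (m : ℤ) = c

/-- `f` is a graded `R`-linear map of degree `dg`. -/
def GradedMap {m n : ℕ} (gr₁ : Fin m → ℤ) (gr₂ : Fin n → ℤ) (dg : ℤ)
    (f : V m →ₗ[R] V n) : Prop :=
  ∀ i : Fin m, IsHomog gr₂ (gr₁ i + dg) (f (e i))

/-- The raw data of a free finitely generated `ℤ`-graded complex over `R = F[U]`. -/
structure PreCplx where
  n : ℕ
  gr : Fin n → ℤ
  d : V n →ₗ[R] V n

def IsCycle (C : PreCplx) (x : V C.n) : Prop := C.d x = 0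

def IsBdry (C : PreCplx) (x : V C.n) : Prop := ∃ y, C.d y = x

/-- `x` is a cycle representing a `U`-nontorsion homology class. -/
def NontorsionClass (C : PreCplx) (x : V C.n) : Prop :=
  IsCycle C x ∧ ∀ k : ℕ, ¬ IsBdry C ((Uu ^ k) • x)

/-- `U⁻¹H_*(C) ≅ F[U, U⁻¹]`, generated by a degree-zero cycle (normalization
convention: the maximal degree of a `U`-nontorsion cycle class is zero, so the
localized homology is supported in even degrees). -/
def HtowerCond (C : PreCplx) : Prop :=
  ∃ x : V C.n, IsCycle C x ∧ IsHomog C.gr 0 x ∧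
    (∀ k : ℕ, ¬ IsBdry C ((Uu ^ k) • x)) ∧
    (∀ y : V C.n, IsCycle C y →
      ∃ (k : ℕ) (p : R) (z : V C.n), (Uu ^ k) • y = p • x + C.d z)

/-- `C` is a genuine graded chain complex. -/
def IsCplx (C : PreCplx) : Prop :=
  GradedMap C.gr C.gr (-1) C.d ∧ C.d ∘ₗ C.d = 0

/-- `f` and `g` are homotopic mod `U`. -/
def HomotopicModU (C₁ C₂ : PreCplx) (f g : V C₁.n →ₗ[R] V C₂.n) : Prop :=
  ∃ H : V C₁.n →ₗ[R] V C₂.n, GradedMap C₁.gr C₂.gr 1 H ∧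
    ∀ x, modU ((f + g + H ∘ₗ C₁.d + C₂.d ∘ₗ H) x)

/-- The raw data of an almost ι-complex. -/
structure PreAI extends PreCplx where
  ι : V n →ₗ[R] V n

/-- `ω = 1 + ι`. -/
def omega (C : PreAI) : V C.n →ₗ[R] V C.n := LinearMap.id + C.ι

/-- `C` is an almost ι-complex. -/
def IsAICplx (C : PreAI) : Prop :=
  IsCplx C.toPreCplx ∧
  GradedMap C.gr C.gr 0 C.ι ∧
  (∀ x, modU ((C.ι ∘ₗ C.d + C.d ∘ₗ C.ι) x)) ∧
  HomotopicModU C.toPreCplx C.toPreCplx (C.ι ∘ₗ C.ι) LinearMap.id ∧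
  HtowerCond C.toPreCplx

/-- `C` is a genuine ι-complex: `ι` is an honest chain map whose square is
genuinely chain homotopic to the identity. -/
def IsIotaCplx (C : PreAI) : Prop :=
  IsCplx C.toPreCplx ∧
  GradedMap C.gr C.gr 0 C.ι ∧
  C.ι ∘ₗ C.d = C.d ∘ₗ C.ι ∧
  (∃ H : V C.n →ₗ[R] V C.n, GradedMap C.gr C.gr 1 H ∧
    C.ι ∘ₗ C.ι + LinearMap.id = H ∘ₗ C.d + C.d ∘ₗ H) ∧
  HtowerCond C.toPreCplx

/-- A reduced complex: the differential vanishes mod `U`. -/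
def Reduced (C : PreAI) : Prop := ∀ x, modU (C.d x)

/-- `f` is an almost ι-morphism. -/
def isAIMorphism (C₁ C₂ : PreAI) (f : V C₁.n →ₗ[R] V C₂.n) : Prop :=
  GradedMap C₁.gr C₂.gr 0 f ∧
  f ∘ₗ C₁.d = C₂.d ∘ₗ f ∧
  HomotopicModU C₁.toPreCplx C₂.toPreCplx (f ∘ₗ C₁.ι) (C₂.ι ∘ₗ f)

/-- A local map: an almost ι-morphism inducing an isomorphism on `U`-localized
homology (equivalently, with the normalization conventions in force, preserving
`U`-nontorsion cycle classes). -/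
def isLocalMap (C₁ C₂ : PreAI) (f : V C₁.n →ₗ[R] V C₂.n) : Prop :=
  isAIMorphism C₁ C₂ f ∧
  ∀ x, NontorsionClass C₁.toPreCplx x → NontorsionClass C₂.toPreCplx (f x)

/-- Local equivalence of almost ι-complexes. -/
def LocallyEquiv (C₁ C₂ : PreAI) : Prop :=
  (∃ f, isLocalMap C₁ C₂ f) ∧ (∃ g, isLocalMap C₂ C₁ g)

/-- The tensor product (over `R`) of linear maps between free modules,
in the bases indexed by `finProdFinEquiv`. -/
def tmap {m n m' n' : ℕ} (f : V m →ₗ[R] V m') (g : V n →ₗ[R] V n') :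
    V (m * n) →ₗ[R] V (m' * n') where
  toFun x := fun p => ∑ q : Fin (m * n),
    x q * f (e (finProdFinEquiv.symm q).1) (finProdFinEquiv.symm p).1
        * g (e (finProdFinEquiv.symm q).2) (finProdFinEquiv.symm p).2
  map_add' x y := by
    funext p
    simp [Pi.add_apply, add_mul, Finset.sum_add_distrib]
  map_smul' c x := by
    funext p
    simp only [RingHom.id_apply, Pi.smul_apply, smul_eq_mul, Finset.mul_sum]
    exact Finset.sum_congr rfl fun q _ => by ring

/-- The tensor product of complexes. -/
def tensorPre (C₁ C₂ : PreCplx) : PreCplx where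
  n := C₁.n * C₂.n
  gr := fun q => C₁.gr (finProdFinEquiv.symm q).1 + C₂.gr (finProdFinEquiv.symm q).2
  d := tmap C₁.d LinearMap.id + tmap LinearMap.id C₂.d

/-- The tensor product of almost ι-complexes. -/
def tensorAI (C₁ C₂ : PreAI) : PreAI where
  toPreCplx := tensorPre C₁.toPreCplx C₂.toPreCplx
  ι := tmap C₁.ι C₂.ι

/-- The transpose of a square matrix map (the dual map in the dual basis). -/
def tr {n : ℕ} (f : V n →ₗ[R] V n) : V n →ₗ[R] V n where
  toFun x := fun j => ∑ i : Fin n, x i * f (e j) i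
  map_add' x y := by
    funext j
    simp [Pi.add_apply, add_mul, Finset.sum_add_distrib]
  map_smul' c x := by
    funext j
    simp only [RingHom.id_apply, Pi.smul_apply, smul_eq_mul, Finset.mul_sum]
    exact Finset.sum_congr rfl fun i _ => by ring

/-- The dual complex. -/
def dualPre (C : PreCplx) : PreCplx where
  n := C.n
  gr := fun i => -C.gr i
  d := tr C.d

/-- The dual almost ι-complex. -/
def dualAI (C : PreAI) : PreAI where
  toPreCplx := dualPre C.toPreCplx
  ι := tr C.ι

/-- The trivial complex `C(0) = (F[U], ∂ = 0, ι = id)`. -/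
def cZero : PreAI := ⟨⟨1, fun _ => 0, 0⟩, LinearMap.id⟩

/-- The contraction map `C ⊗ C^∨ → F[U]`, `x ⊗ y ↦ y(x)`. -/
def contr (n : ℕ) : V (n * n) →ₗ[R] V 1 where
  toFun x := fun _ => ∑ i : Fin n, x (finProdFinEquiv (i, i))
  map_add' x y := by funext j; simp [Pi.add_apply, Finset.sum_add_distrib]
  map_smul' c x := by
    funext j
    simp only [RingHom.id_apply, Pi.smul_apply, smul_eq_mul, Finset.mul_sum]

/-! ### Standard and augmented complexes -/

/-- The `i`-th symbol (0-indexed) of the parameter sequence, padded by zeros. -/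
def seqAt (M : List ℤ) (i : ℕ) : ℤ := M.getD i 0

/-- Grading step of a `b`-arrow. -/
def bstep (b : ℤ) : ℤ := (if 0 < b then 1 else -1) - 2 * b

/-- Grading of the generator `T_i` of the standard/augmented complex. -/
def stdGr (M : List ℤ) (i : ℕ) : ℤ :=
  ∑ s ∈ Finset.range i, if s % 2 = 1 then bstep (seqAt M s) else 0

/-- A linear endomorphism of `V n` given by a matrix of coefficients. -/
def ofMatrix {n : ℕ} (c : ℕ → ℕ → R) : V n →ₗ[R] V n where
  toFun x := fun j => ∑ i : Fin n, x i * c i j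
  map_add' x y := by
    funext j
    simp [Pi.add_apply, add_mul, Finset.sum_add_distrib]
  map_smul' r x := by
    funext j
    simp only [RingHom.id_apply, Pi.smul_apply, smul_eq_mul, Finset.mul_sum]
    exact Finset.sum_congr rfl fun i _ => by ring

/-- Matrix of the differential of the standard/augmented complex: the `b`-symbol
at (0-indexed) odd position `s` of `M` relates `T_s` and `T_{s+1}`. -/
def dCoef (M : List ℤ) (i j : ℕ) : R :=
  if i % 2 = 1 ∧ seqAt M i < 0 ∧ j = i + 1 then Uu ^ (seqAt M i).natAbs
  else if i % 2 = 0 ∧ 0 < i ∧ 0 < seqAt M (i - 1) ∧ j + 1 = i then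
    Uu ^ (seqAt M (i - 1)).natAbs
  else 0

/-- Matrix of `ω = 1 + ι` on the standard/augmented complex: the `a`-symbol at
(0-indexed) even position `s` of `M` relates `T_s` and `T_{s+1}`. -/
def wCoef (M : List ℤ) (i j : ℕ) : R :=
  if i % 2 = 0 ∧ seqAt M i = -1 ∧ j = i + 1 then 1
  else if i % 2 = 1 ∧ seqAt M (i - 1) = 1 ∧ j + 1 = i then 1
  else 0

/-- Matrix of `ι = 1 + ω` (char 2). -/
def iCoef (M : List ℤ) (i j : ℕ) : R :=
  (if i = j then 1 else 0) + wCoef M i j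

/-- The standard (even length) or augmented (odd length) complex on generators
`T_0, …, T_{M.length}` determined by the symbol sequence `M`. -/
def symCplx (M : List ℤ) : PreAI :=
  ⟨⟨M.length + 1, fun i => stdGr M i, ofMatrix (dCoef M)⟩, ofMatrix (iCoef M)⟩

/-- Validity of a standard parameter sequence. -/
def StdParams (M : List ℤ) : Prop :=
  M.length % 2 = 0 ∧
  ∀ i < M.length, if i % 2 = 0 then seqAt M i = 1 ∨ seqAt M i = -1 else seqAt M i ≠ 0

/-- Validity of an augmented parameter sequence. -/
def AugParams (M : List ℤ) : Prop :=
  M.length % 2 = 1 ∧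
  ∀ i < M.length, if i % 2 = 0 then seqAt M i = 1 ∨ seqAt M i = -1 else seqAt M i ≠ 0

/-- The modified order `<!` on `ℤ`: `−1 <! −2 <! ⋯ <! 0 <! ⋯ <! 2 <! 1`. -/
def ltB (x y : ℤ) : Prop :=
  (x < 0 ∧ 0 ≤ y) ∨ (x ≤ 0 ∧ 0 < y) ∨ (x < 0 ∧ y < 0 ∧ y < x) ∨ (0 < x ∧ 0 < y ∧ y < x)

def leB (x y : ℤ) : Prop := ltB x y ∨ x = y

/-- Strict lexicographic order on (zero-padded) parameter sequences. -/
def lexLt (M M' : List ℤ) : Prop :=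
  ∃ k : ℕ, (∀ i < k, seqAt M i = seqAt M' i) ∧ ltB (seqAt M k) (seqAt M' k)

def lexLe (M M' : List ℤ) : Prop := lexLt M M' ∨ ∀ i, seqAt M i = seqAt M' i

/-- A short map from the standard (even `M.length`) or augmented (odd `M.length`)
complex determined by `M` to `A`: the `ω`-condition (standard case) resp. the
`∂`-condition (augmented case) is waived on the final generator. -/
def isShortMap (M : List ℤ) (A : PreAI) (f : V (M.length + 1) →ₗ[R] V A.n) : Prop :=
  GradedMap (symCplx M).gr A.gr 0 f ∧
  (∀ i : Fin (M.length + 1), ((i : ℕ) < M.length ∨ M.length % 2 = 0) →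
    A.d (f (e i)) = f ((symCplx M).d (e i))) ∧
  (∀ i : Fin (M.length + 1), ((i : ℕ) < M.length ∨ M.length % 2 = 1) →
    modU ((omega A) (f (e i)) + f ((omega (symCplx M)) (e i))))

/-- A local short map: `T_0` goes to a `U`-nontorsion cycle class. -/
def isLocalShortMap (M : List ℤ) (A : PreAI) (f : V (M.length + 1) →ₗ[R] V A.n) : Prop :=
  isShortMap M A f ∧ NontorsionClass A.toPreCplx (f (e ⟨0, Nat.succ_pos _⟩))

/-- The sequence of invariants `s_i(A)` (1-indexed in the paper; 0-indexed here):
`s k` is the `≤!`-maximum of the `(k+1)`-st symbols among standard complexes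
locally mapping to `A` whose first `k` symbols are `s 0, …, s (k-1)`. -/
def IsInvariantSeq (A : PreAI) (s : ℕ → ℤ) : Prop :=
  ∀ k : ℕ,
    (∃ M : List ℤ, StdParams M ∧ (∃ f, isLocalMap (symCplx M) A f) ∧
      ∀ i ≤ k, seqAt M i = s i) ∧
    (∀ M : List ℤ, StdParams M → (∃ f, isLocalMap (symCplx M) A f) →
      (∀ i < k, seqAt M i = s i) → leB (seqAt M k) (s k))

/-- Reduction mod `U` of a linear map, as an `F₂`-linear map. -/
def mapHat {m n : ℕ} (f : V m →ₗ[R] V n) : (Fin m → F2) →ₗ[F2] (Fin n → F2) where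
  toFun x := fun j => ∑ i : Fin m, x i * (f (e i) j).coeff 0
  map_add' x y := by
    funext j
    simp [Pi.add_apply, add_mul, Finset.sum_add_distrib]
  map_smul' c x := by
    funext j
    simp only [RingHom.id_apply, Pi.smul_apply, smul_eq_mul, Finset.mul_sum]
    exact Finset.sum_congr rfl fun i _ => by ring

/-- The induced action `ω̂` on `C/U`. -/
def wHat (C : PreAI) : (Fin C.n → F2) →ₗ[F2] (Fin C.n → F2) := mapHat (omega C)

end AI

namespace AI

/-! ### Auxiliary lemmas -/

lemma addSelfR (p : R) : p + p = 0 := by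
  have h : (2 : R) = 0 := by
    have := CharP.cast_eq_zero R 2
    simpa using this
  calc p + p = 2 * p := by ring
  _ = 0 := by rw [h, zero_mul]

lemma addSelfV {k : ℕ} (w : V k) : w + w = 0 := by
  funext j
  exact addSelfR (w j)

lemma e_apply {n : ℕ} (i j : Fin n) : e i j = if j = i then 1 else 0 := rfl

lemma vec_eq_sum {n : ℕ} (v : V n) : v = ∑ i : Fin n, v i • e i := by
  funext j
  rw [Finset.sum_apply]
  rw [Finset.sum_eq_single j]
  · simp [e_apply]
  · intro i _ hne
    simp [e_apply, Ne.symm hne]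
  · intro h; exact absurd (Finset.mem_univ j) h

lemma map_eq_sum {m n : ℕ} (f : V m →ₗ[R] V n) (v : V m) :
    f v = ∑ i : Fin m, v i • f (e i) := by
  conv_lhs => rw [vec_eq_sum v, map_sum]
  exact Finset.sum_congr rfl fun i _ => by rw [map_smul]

lemma apply_eq_sum {m n : ℕ} (f : V m →ₗ[R] V n) (v : V m) (j : Fin n) :
    f v j = ∑ i : Fin m, v i * f (e i) j := by
  rw [map_eq_sum f v]
  rw [Finset.sum_apply]
  rfl

lemma ext_basis {m n : ℕ} {f g : V m →ₗ[R] V n} (h : ∀ i, f (e i) = g (e i)) :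
    ∀ v, f v = g v := by
  intro v
  rw [map_eq_sum f v, map_eq_sum g v]
  exact Finset.sum_congr rfl fun i _ => by rw [h i]

lemma scal_eq_sum {m : ℕ} (f : V m →ₗ[R] R) (v : V m) :
    f v = ∑ i : Fin m, v i * f (e i) := by
  conv_lhs => rw [vec_eq_sum v, map_sum]
  exact Finset.sum_congr rfl fun i _ => by rw [map_smul]; rfl
/-- Pure tensor of two vectors. -/
def tvec {m n : ℕ} (u : V m) (v : V n) : V (m * n) :=
  fun p => u (finProdFinEquiv.symm p).1 * v (finProdFinEquiv.symm p).2

lemma tvec_add_left {m n : ℕ} (u u' : V m) (v : V n) :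
    tvec (u + u') v = tvec u v + tvec u' v := by
  funext p; simp [tvec, add_mul]

lemma tvec_add_right {m n : ℕ} (u : V m) (v v' : V n) :
    tvec u (v + v') = tvec u v + tvec u v' := by
  funext p; simp [tvec, mul_add]

lemma tvec_smul_left {m n : ℕ} (r : R) (u : V m) (v : V n) :
    tvec (r • u) v = r • tvec u v := by
  funext p; simp [tvec, mul_assoc]

lemma tvec_smul_right {m n : ℕ} (r : R) (u : V m) (v : V n) :
    tvec u (r • v) = r • tvec u v := by
  funext p; simp [tvec]; ring

lemma tvec_zero_left {m n : ℕ} (v : V n) : tvec (0 : V m) v = 0 := by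
  funext p; simp [tvec]

lemma tvec_zero_right {m n : ℕ} (u : V m) : tvec u (0 : V n) = 0 := by
  funext p; simp [tvec]

lemma e_eq_tvec {m n : ℕ} (q : Fin (m * n)) :
    e q = tvec (e (finProdFinEquiv.symm q).1) (e (finProdFinEquiv.symm q).2) := by
  funext p
  simp only [tvec, e_apply]
  by_cases h : p = q
  · subst h; simp
  · rw [if_neg h]
    have : ¬((finProdFinEquiv.symm p).1 = (finProdFinEquiv.symm q).1 ∧
        (finProdFinEquiv.symm p).2 = (finProdFinEquiv.symm q).2) := by
      intro ⟨h1, h2⟩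
      apply h
      have : finProdFinEquiv.symm p = finProdFinEquiv.symm q := Prod.ext h1 h2
      exact finProdFinEquiv.symm.injective this
    rcases not_and_or.mp this with h' | h'
    · rw [if_neg h', zero_mul]
    · rw [if_neg h', mul_zero]

lemma tmap_tvec {m n m' n' : ℕ} (f : V m →ₗ[R] V m') (g : V n →ₗ[R] V n')
    (u : V m) (v : V n) : tmap f g (tvec u v) = tvec (f u) (g v) := by
  funext p
  show (∑ q : Fin (m * n), _) = _
  rw [← Equiv.sum_comp (finProdFinEquiv : Fin m × Fin n ≃ Fin (m * n))]
  rw [Fintype.sum_prod_type]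
  simp only [tvec, Equiv.symm_apply_apply]
  rw [apply_eq_sum f u, apply_eq_sum g v, Finset.sum_mul_sum]
  exact Finset.sum_congr rfl fun i _ => Finset.sum_congr rfl fun j _ => by ring

lemma tmap_id_tvec {m n n' : ℕ} (g : V n →ₗ[R] V n') (u : V m) (v : V n) :
    tmap LinearMap.id g (tvec u v) = tvec u (g v) := by
  rw [tmap_tvec]; rfl

lemma tmap_id_tvec' {m m' n : ℕ} (f : V m →ₗ[R] V m') (u : V m) (v : V n) :
    tmap f LinearMap.id (tvec u v) = tvec (f u) v := by
  rw [tmap_tvec]; rfl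
lemma coeff_mul_ne {p q : R} {m : ℕ} (h : (p * q).coeff m ≠ 0) :
    ∃ a b : ℕ, a + b = m ∧ p.coeff a ≠ 0 ∧ q.coeff b ≠ 0 := by
  rw [Polynomial.coeff_mul] at h
  obtain ⟨ab, hab, hne⟩ := Finset.exists_ne_zero_of_sum_ne_zero h
  refine ⟨ab.1, ab.2, Finset.HasAntidiagonal.mem_antidiagonal.mp hab, ?_, ?_⟩
  · intro h0; exact hne (by rw [h0, zero_mul])
  · intro h0; exact hne (by rw [h0, mul_zero])

lemma homog_add {n : ℕ} {gr : Fin n → ℤ} {c : ℤ} {u v : V n}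
    (hu : IsHomog gr c u) (hv : IsHomog gr c v) : IsHomog gr c (u + v) := by
  intro j m hm
  rw [Pi.add_apply, Polynomial.coeff_add] at hm
  rcases (by by_contra hc; push_neg at hc; rw [hc.1, hc.2, add_zero] at hm; exact hm rfl :
      (u j).coeff m ≠ 0 ∨ (v j).coeff m ≠ 0) with h | h
  · exact hu j m h
  · exact hv j m h

lemma homog_zero {n : ℕ} {gr : Fin n → ℤ} {c : ℤ} : IsHomog gr c (0 : V n) := by
  intro j m hm; simp at hm

lemma homog_tvec {m n : ℕ} {gr₁ : Fin m → ℤ} {gr₂ : Fin n → ℤ} {c₁ c₂ : ℤ}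
    {u : V m} {v : V n} (hu : IsHomog gr₁ c₁ u) (hv : IsHomog gr₂ c₂ v) :
    IsHomog (fun q : Fin (m * n) =>
      gr₁ (finProdFinEquiv.symm q).1 + gr₂ (finProdFinEquiv.symm q).2) (c₁ + c₂)
      (tvec u v) := by
  intro j k hk
  obtain ⟨a, b, hab, ha, hb⟩ := coeff_mul_ne hk
  have h1 := hu _ a ha
  have h2 := hv _ b hb
  have : (k : ℤ) = (a : ℤ) + b := by exact_mod_cast hab.symm
  show gr₁ (finProdFinEquiv.symm j).1 + gr₂ (finProdFinEquiv.symm j).2 - 2 * (k : ℤ) = c₁ + c₂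
  omega

lemma homog_map {m n : ℕ} {gr₁ : Fin m → ℤ} {gr₂ : Fin n → ℤ} {dg : ℤ}
    {f : V m →ₗ[R] V n} (hf : GradedMap gr₁ gr₂ dg f) {c : ℤ} {u : V m}
    (hu : IsHomog gr₁ c u) : IsHomog gr₂ (c + dg) (f u) := by
  intro j k hk
  rw [apply_eq_sum f u j] at hk
  rw [Polynomial.finset_sum_coeff] at hk
  obtain ⟨i, _, hne⟩ := Finset.exists_ne_zero_of_sum_ne_zero hk
  obtain ⟨a, b, hab, ha, hb⟩ := coeff_mul_ne hne
  have h1 := hu i a ha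
  have h2 := hf i j b hb
  have : (k : ℤ) = (a : ℤ) + b := by exact_mod_cast hab.symm
  omega

lemma homog_congr {n : ℕ} {gr : Fin n → ℤ} {c c' : ℤ} {u : V n}
    (h : IsHomog gr c u) (hc : c = c') : IsHomog gr c' u := hc ▸ h

lemma gradedMap_add {m n : ℕ} {gr₁ : Fin m → ℤ} {gr₂ : Fin n → ℤ} {dg : ℤ}
    {f g : V m →ₗ[R] V n} (hf : GradedMap gr₁ gr₂ dg f) (hg : GradedMap gr₁ gr₂ dg g) :
    GradedMap gr₁ gr₂ dg (f + g) := fun i => homog_add (hf i) (hg i)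

lemma gradedMap_comp {m n k : ℕ} {gr₁ : Fin m → ℤ} {gr₂ : Fin n → ℤ} {gr₃ : Fin k → ℤ}
    {d₁ d₂ : ℤ} {f : V m →ₗ[R] V n} {g : V n →ₗ[R] V k}
    (hf : GradedMap gr₁ gr₂ d₁ f) (hg : GradedMap gr₂ gr₃ d₂ g) :
    GradedMap gr₁ gr₃ (d₁ + d₂) (g ∘ₗ f) := by
  intro i
  exact homog_congr (homog_map hg (hf i)) (by ring)

lemma gradedMap_id {n : ℕ} {gr : Fin n → ℤ} : GradedMap gr gr 0 (LinearMap.id : V n →ₗ[R] V n) := by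
  intro i j m hm
  simp only [LinearMap.id_coe, id_eq, e_apply] at hm
  by_cases h : j = i
  · subst h
    have : m = 0 := by
      by_contra h0
      apply hm
      simp [Polynomial.coeff_one, h0]
    subst this; simp
  · exfalso; apply hm; simp [h]

lemma gradedMap_tmap {m n m' n' : ℕ} {gr₁ : Fin m → ℤ} {gr₂ : Fin n → ℤ}
    {gr₁' : Fin m' → ℤ} {gr₂' : Fin n' → ℤ} {a b : ℤ}
    {f : V m →ₗ[R] V m'} {g : V n →ₗ[R] V n'}
    (hf : GradedMap gr₁ gr₁' a f) (hg : GradedMap gr₂ gr₂' b g) :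
    GradedMap (fun q : Fin (m * n) =>
        gr₁ (finProdFinEquiv.symm q).1 + gr₂ (finProdFinEquiv.symm q).2)
      (fun q : Fin (m' * n') =>
        gr₁' (finProdFinEquiv.symm q).1 + gr₂' (finProdFinEquiv.symm q).2)
      (a + b) (tmap f g) := by
  intro q
  rw [e_eq_tvec q, tmap_tvec]
  exact homog_congr
    (homog_tvec (hf (finProdFinEquiv.symm q).1) (hg (finProdFinEquiv.symm q).2)) (by ring)

/-! ### modU lemmas -/

lemma modU_add {n : ℕ} {u v : V n} (hu : modU u) (hv : modU v) : modU (u + v) := by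
  intro j; rw [Pi.add_apply, Polynomial.coeff_add, hu j, hv j, add_zero]

lemma modU_smul {n : ℕ} (r : R) {v : V n} (hv : modU v) : modU (r • v) := by
  intro j
  rw [Pi.smul_apply, smul_eq_mul, Polynomial.mul_coeff_zero, hv j, mul_zero]

lemma modU_zero {n : ℕ} : modU (0 : V n) := by intro j; simp

lemma modU_map {m n : ℕ} (f : V m →ₗ[R] V n) {v : V m} (hv : modU v) : modU (f v) := by
  have : v = Uu • fun j => (v j).divX := by
    funext j
    rw [Pi.smul_apply, smul_eq_mul, Uu, mul_comm]
    conv_lhs => rw [← Polynomial.divX_mul_X_add (v j)]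
    rw [hv j, map_zero, add_zero]
  rw [this, map_smul]
  intro j
  rw [Pi.smul_apply, smul_eq_mul, Polynomial.mul_coeff_zero, Uu, Polynomial.coeff_X_zero,
    zero_mul]

lemma modU_tvec_left {m n : ℕ} {u : V m} (hu : modU u) (v : V n) : modU (tvec u v) := by
  intro j
  rw [tvec, Polynomial.mul_coeff_zero, hu _, zero_mul]

lemma modU_tvec_right {m n : ℕ} (u : V m) {v : V n} (hv : modU v) : modU (tvec u v) := by
  intro j
  rw [tvec, Polynomial.mul_coeff_zero, hv _, mul_zero]

lemma modU_of_basis {m n : ℕ} {f : V m →ₗ[R] V n} (h : ∀ i, modU (f (e i))) :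
    ∀ v, modU (f v) := by
  intro v
  rw [map_eq_sum f v]
  have : ∀ (s : Finset (Fin m)), modU (∑ i ∈ s, v i • f (e i)) := by
    intro s
    induction s using Finset.induction with
    | empty => simpa using modU_zero
    | insert _ _ hx ih =>
      rw [Finset.sum_insert hx]
      exact modU_add (modU_smul _ (h _)) ih
  exact this _
/-! ### Homogeneous components -/

/-- Keep only the coefficients of `p` at indices satisfying `φ`. -/
def pfilter (φ : ℕ → Prop) [DecidablePred φ] (p : R) : R :=
  ∑ m ∈ p.support, if φ m then Polynomial.monomial m (p.coeff m) else 0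

lemma coeff_pfilter (φ : ℕ → Prop) [DecidablePred φ] (p : R) (m : ℕ) :
    (pfilter φ p).coeff m = if φ m then p.coeff m else 0 := by
  rw [pfilter, Polynomial.finset_sum_coeff]
  rw [Finset.sum_eq_single m]
  · by_cases h : m ∈ p.support
    · by_cases hφ : φ m
      · rw [if_pos hφ, if_pos hφ, Polynomial.coeff_monomial, if_pos rfl]
      · rw [if_neg hφ, if_neg hφ, Polynomial.coeff_zero]
    · rw [Polynomial.notMem_support_iff.mp h]
      simp
  · intro a _ hne
    by_cases hφ : φ a
    · rw [if_pos hφ, Polynomial.coeff_monomial, if_neg hne]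
    · rw [if_neg hφ, Polynomial.coeff_zero]
  · intro h
    rw [Polynomial.notMem_support_iff.mp h]
    simp

/-- Homogeneous component of degree `c` of a vector. -/
def Pc {n : ℕ} (gr : Fin n → ℤ) (c : ℤ) (v : V n) : V n :=
  fun j => pfilter (fun m => gr j - 2 * (m : ℤ) = c) (v j)

lemma coeff_Pc {n : ℕ} (gr : Fin n → ℤ) (c : ℤ) (v : V n) (j : Fin n) (m : ℕ) :
    (Pc gr c v j).coeff m = if gr j - 2 * (m : ℤ) = c then (v j).coeff m else 0 :=
  coeff_pfilter _ _ _

lemma d_Pc {n : ℕ} {gr : Fin n → ℤ} {d : V n →ₗ[R] V n}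
    (hd : GradedMap gr gr (-1) d) (c : ℤ) (v : V n) :
    d (Pc gr c v) = Pc gr (c - 1) (d v) := by
  funext j
  apply Polynomial.ext
  intro m
  rw [apply_eq_sum d (Pc gr c v) j, Polynomial.finset_sum_coeff, coeff_Pc,
    apply_eq_sum d v j]
  by_cases hP : gr j - 2 * (m : ℤ) = c - 1
  · rw [if_pos hP, Polynomial.finset_sum_coeff]
    apply Finset.sum_congr rfl
    intro i _
    rw [Polynomial.coeff_mul, Polynomial.coeff_mul]
    apply Finset.sum_congr rfl
    intro ab hab
    have habm : ab.1 + ab.2 = m := Finset.HasAntidiagonal.mem_antidiagonal.mp hab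
    rw [coeff_Pc]
    by_cases hb : (d (e i) j).coeff ab.2 = 0
    · rw [hb, mul_zero, mul_zero]
    · have := hd i j ab.2 hb
      have hcond : gr i - 2 * (ab.1 : ℤ) = c := by
        have : (m : ℤ) = (ab.1 : ℤ) + ab.2 := by exact_mod_cast habm.symm
        omega
      rw [if_pos hcond]
  · rw [if_neg hP]
    apply Finset.sum_eq_zero
    intro i _
    rw [Polynomial.coeff_mul]
    apply Finset.sum_eq_zero
    intro ab hab
    have habm : ab.1 + ab.2 = m := Finset.HasAntidiagonal.mem_antidiagonal.mp hab
    rw [coeff_Pc]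
    by_cases hb : (d (e i) j).coeff ab.2 = 0
    · rw [hb, mul_zero]
    · have := hd i j ab.2 hb
      have hcond : ¬(gr i - 2 * (ab.1 : ℤ) = c) := by
        have : (m : ℤ) = (ab.1 : ℤ) + ab.2 := by exact_mod_cast habm.symm
        omega
      rw [if_neg hcond, zero_mul]
lemma Pc_smul_homog {n : ℕ} {gr : Fin n → ℤ} {x : V n} (hx : IsHomog gr 0 x)
    (s : R) (k : ℕ) :
    Pc gr (-(2 * (k : ℤ))) (s • x) = (Polynomial.C (s.coeff k) * Uu ^ k) • x := by
  funext j
  apply Polynomial.ext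
  intro m
  rw [coeff_Pc]
  have hrhs : (((Polynomial.C (s.coeff k) * Uu ^ k) • x) j).coeff m
      = s.coeff k * (if k ≤ m then (x j).coeff (m - k) else 0) := by
    rw [Pi.smul_apply, smul_eq_mul, mul_assoc, Polynomial.coeff_C_mul, Uu,
      mul_comm (Polynomial.X ^ k) (x j), Polynomial.coeff_mul_X_pow']
  rw [hrhs]
  by_cases hP : gr j - 2 * (m : ℤ) = -(2 * (k : ℤ))
  · rw [if_pos hP, Pi.smul_apply, smul_eq_mul, Polynomial.coeff_mul]
    by_cases hk : k ≤ m
    · rw [if_pos hk]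
      rw [Finset.sum_eq_single (k, m - k)]
      · intro ab hab hne
        by_cases hxb : (x j).coeff ab.2 = 0
        · rw [hxb, mul_zero]
        · exfalso
          have h2 := hx j ab.2 hxb
          have habm : ab.1 + ab.2 = m := Finset.HasAntidiagonal.mem_antidiagonal.mp hab
          have hb : ab.2 = m - k := by omega
          have ha : ab.1 = k := by omega
          exact hne (Prod.ext ha hb)
      · intro h
        exact absurd (Finset.HasAntidiagonal.mem_antidiagonal.mpr (by omega)) h
    · rw [if_neg hk, mul_zero]
      apply Finset.sum_eq_zero
      intro ab hab
      by_cases hxb : (x j).coeff ab.2 = 0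
      · rw [hxb, mul_zero]
      · exfalso
        have h2 := hx j ab.2 hxb
        have habm : ab.1 + ab.2 = m := Finset.HasAntidiagonal.mem_antidiagonal.mp hab
        omega
  · rw [if_neg hP]
    by_cases hk : k ≤ m
    · rw [if_pos hk]
      by_cases hxb : (x j).coeff (m - k) = 0
      · rw [hxb, mul_zero]
      · exfalso
        have h2 := hx j (m - k) hxb
        have : ((m - k : ℕ) : ℤ) = (m : ℤ) - k := by omega
        omega
    · rw [if_neg hk, mul_zero]

/-- Graded nontorsion: if `x` is a homogeneous degree-0 vector no `U`-power of
which is a boundary, then no nonzero multiple of `x` is a boundary. -/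
lemma graded_nontorsion {C : PreCplx} (hgr : GradedMap C.gr C.gr (-1) C.d)
    {x : V C.n} (hx : IsHomog C.gr 0 x)
    (hnt : ∀ k : ℕ, ¬ IsBdry C ((Uu ^ k) • x)) {s : R} (hs : s ≠ 0) :
    ¬ ∃ z, C.d z = s • x := by
  rintro ⟨z, hz⟩
  set k := s.natDegree
  have hc : s.coeff k ≠ 0 := by
    rw [← Polynomial.leadingCoeff]
    exact Polynomial.leadingCoeff_ne_zero.mpr hs
  have hc1 : s.coeff k = 1 := by
    have : (s.coeff k : ZMod 2) ≠ 0 := hc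
    revert this
    generalize s.coeff k = c
    revert c
    decide
  apply hnt k
  refine ⟨Pc C.gr (-(2 * (k : ℤ)) + 1) z, ?_⟩
  have := d_Pc hgr (-(2 * (k : ℤ)) + 1) z
  rw [hz] at this
  have h2 : Pc C.gr (-(2 * (k : ℤ)) + 1 - 1) (s • x) = Pc C.gr (-(2 * (k : ℤ))) (s • x) := by
    norm_num
  rw [h2] at this
  rw [this, Pc_smul_homog hx s k, hc1, map_one, one_mul]
/-- Integral standard data for a complex satisfying the tower condition. -/
lemma int_data (C : PreCplx) (hic : IsCplx C) (ht : HtowerCond C) :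
    ∃ (x : V C.n) (P : V C.n →ₗ[R] R) (h : V C.n →ₗ[R] V C.n) (M : ℕ),
      C.d x = 0 ∧ IsHomog C.gr 0 x ∧ (∀ k : ℕ, ¬ IsBdry C ((Uu ^ k) • x)) ∧
      (∀ v, P (C.d v) = 0) ∧ P x = Uu ^ M ∧
      (∀ v, (Uu ^ M) • v = P v • x + C.d (h v) + h (C.d v)) := by
  obtain ⟨hgr, hdd⟩ := hic
  obtain ⟨x, hxc, hxh, hxnt, hsp⟩ := ht
  have hddv : ∀ v, C.d (C.d v) = 0 := fun v => LinearMap.ext_iff.mp hdd v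
  set B : Submodule R (V C.n) := LinearMap.range C.d with hBdef
  -- uniqueness of coefficients
  have huniq : ∀ p q : R, (p - q) • x ∈ B → p = q := by
    intro p q hpq
    by_contra hne
    have hs : p - q ≠ 0 := sub_ne_zero.mpr hne
    obtain ⟨z, hz⟩ := hpq
    exact graded_nontorsion hgr hxh hxnt hs ⟨z, hz⟩
  -- section of the differential on its range
  obtain ⟨r, bB⟩ := Submodule.basisOfPid (Pi.basisFun R (Fin C.n)) B
  have hpre : ∀ i : Fin r, ∃ v, C.d v = (bB i : V C.n) := fun i =>
    LinearMap.mem_range.mp (bB i).2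
  let σ : B →ₗ[R] V C.n := Module.Basis.constr bB ℕ (fun i => Classical.choose (hpre i))
  have hσ : ∀ b : B, C.d (σ b) = (b : V C.n) := by
    have : C.d ∘ₗ σ = B.subtype := by
      apply Module.Basis.ext bB
      intro i
      rw [LinearMap.comp_apply]
      show C.d (σ (bB i)) = (bB i : V C.n)
      rw [show σ (bB i) = Classical.choose (hpre i) from Module.Basis.constr_basis bB ℕ _ i]
      exact Classical.choose_spec (hpre i)
    intro b
    exact LinearMap.ext_iff.mp this b
  let τ : V C.n →ₗ[R] V C.n := σ ∘ₗ C.d.rangeRestrict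
  have hτ : ∀ v, C.d (τ v) = C.d v := by
    intro v
    show C.d (σ (C.d.rangeRestrict v)) = C.d v
    rw [hσ]
    rfl
  have hτd : ∀ v, τ (C.d v) = 0 := by
    intro v
    show σ (C.d.rangeRestrict (C.d v)) = 0
    have : C.d.rangeRestrict (C.d v) = 0 := by
      apply Subtype.ext
      show C.d (C.d v) = 0
      exact hddv v
    rw [this, map_zero]
  have hZv : ∀ v, C.d (v - τ v) = 0 := by
    intro v
    rw [map_sub, hτ, sub_self]
  -- uniform bound on the kernel
  have hZfg : (LinearMap.ker C.d).FG := IsNoetherian.noetherian _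
  obtain ⟨S, hS⟩ := hZfg
  have hall : ∀ s : {s // s ∈ S}, ∃ (k : ℕ) (p : R) (w : V C.n), (Uu ^ k) • (s : V C.n) = p • x + C.d w := by
    intro s
    apply hsp
    show C.d (s : V C.n) = 0
    have : (s : V C.n) ∈ LinearMap.ker C.d := by
      rw [← hS]
      exact Submodule.subset_span s.2
    exact LinearMap.mem_ker.mp this
  choose K Pg W hKs using hall
  set M₀ := Finset.univ.sup (fun s : {s // s ∈ S} => K s) with hM₀def
  have hM₀ : ∀ s : {s // s ∈ S}, ∃ (p : R) (w : V C.n), (Uu ^ M₀) • (s : V C.n) = p • x + C.d w := by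
    intro s
    have hk : K s ≤ M₀ := Finset.le_sup (Finset.mem_univ s)
    refine ⟨Uu ^ (M₀ - K s) * Pg s, (Uu ^ (M₀ - K s)) • W s, ?_⟩
    have h1 : (Uu ^ M₀) • (s : V C.n) = (Uu ^ (M₀ - K s)) • ((Uu ^ (K s)) • (s : V C.n)) := by
      rw [smul_smul, ← pow_add]
      congr 2
      omega
    rw [h1, hKs s, smul_add, map_smul, smul_smul]
  set Zok : Submodule R (V C.n) :=
    { carrier := {z | ∃ (p : R) (w : V C.n), (Uu ^ M₀) • z = p • x + C.d w}
      add_mem' := by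
        rintro a b ⟨p, w, hp⟩ ⟨q, u, hq⟩
        refine ⟨p + q, w + u, ?_⟩
        rw [smul_add, hp, hq, add_smul, map_add]
        abel
      zero_mem' := ⟨0, 0, by simp⟩
      smul_mem' := by
        rintro c a ⟨p, w, hp⟩
        refine ⟨c * p, c • w, ?_⟩
        rw [smul_comm, hp, smul_add, map_smul, smul_smul] } with hZokdef
  have hZok : LinearMap.ker C.d ≤ Zok := by
    rw [← hS, Submodule.span_le]
    intro s hs
    exact hM₀ ⟨s, hs⟩
  have hex : ∀ v, ∃ p : R, (Uu ^ M₀) • (v - τ v) - p • x ∈ B := by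
    intro v
    obtain ⟨p, w, hp⟩ := hZok (LinearMap.mem_ker.mpr (hZv v))
    refine ⟨p, ⟨w, ?_⟩⟩
    rw [hp]
    abel
  set Pfun : V C.n → R := fun v => Classical.choose (hex v) with hPfundef
  have hPspec : ∀ v, (Uu ^ M₀) • (v - τ v) - Pfun v • x ∈ B := fun v =>
    Classical.choose_spec (hex v)
  have huniq' : ∀ (v : V C.n) (p : R), (Uu ^ M₀) • (v - τ v) - p • x ∈ B → Pfun v = p := by
    intro v p hp
    apply huniq
    have := B.sub_mem hp (hPspec v)
    have heq : (Uu ^ M₀) • (v - τ v) - p • x - ((Uu ^ M₀) • (v - τ v) - Pfun v • x)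
        = (Pfun v - p) • x := by
      rw [sub_smul]
      abel
    rw [heq] at this
    exact this
  have hPadd : ∀ u v, Pfun (u + v) = Pfun u + Pfun v := by
    intro u v
    apply huniq'
    have h1 := hPspec u
    have h2 := hPspec v
    have heq : (Uu ^ M₀) • (u + v - τ (u + v)) - (Pfun u + Pfun v) • x
        = ((Uu ^ M₀) • (u - τ u) - Pfun u • x) + ((Uu ^ M₀) • (v - τ v) - Pfun v • x) := by
      rw [map_add, add_smul]
      rw [show u + v - (τ u + τ v) = (u - τ u) + (v - τ v) by abel]
      rw [smul_add]
      abel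
    rw [heq]
    exact B.add_mem h1 h2
  have hPsmul : ∀ (c : R) (v : V C.n), Pfun (c • v) = c * Pfun v := by
    intro c v
    apply huniq'
    have h1 := hPspec v
    have heq : (Uu ^ M₀) • (c • v - τ (c • v)) - (c * Pfun v) • x
        = c • ((Uu ^ M₀) • (v - τ v) - Pfun v • x) := by
      rw [map_smul, smul_sub, mul_smul, smul_sub, ← smul_comm (Uu ^ M₀) c, smul_sub,
        smul_sub]
    rw [heq]
    exact B.smul_mem c h1
  let P : V C.n →ₗ[R] R :=
    { toFun := Pfun
      map_add' := hPadd
      map_smul' := hPsmul }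
  -- the homotopy
  let L : V C.n →ₗ[R] V C.n :=
    (Uu ^ M₀) • (LinearMap.id - τ) - LinearMap.toSpanSingleton R (V C.n) x ∘ₗ P
  have hLv : ∀ v, L v = (Uu ^ M₀) • (v - τ v) - Pfun v • x := by
    intro v
    simp only [L, LinearMap.sub_apply, LinearMap.smul_apply, LinearMap.comp_apply,
      LinearMap.id_coe, id_eq, LinearMap.toSpanSingleton_apply]
    rfl
  have hLmem : ∀ v, L v ∈ B := fun v => (hLv v) ▸ hPspec v
  let β : V C.n →ₗ[R] B := L.codRestrict B hLmem
  let h : V C.n →ₗ[R] V C.n := σ ∘ₗ β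
  have hPd : ∀ v, Pfun (C.d v) = 0 := by
    intro v
    apply huniq'
    rw [hτd, sub_zero, zero_smul, sub_zero]
    exact B.smul_mem _ (LinearMap.mem_range_self C.d v)
  have hPx : Pfun x = Uu ^ M₀ := by
    apply huniq'
    have hτx : τ x = 0 := by
      show σ (C.d.rangeRestrict x) = 0
      have : C.d.rangeRestrict x = 0 := by
        apply Subtype.ext
        exact hxc
      rw [this, map_zero]
    rw [hτx, sub_zero, sub_self]
    exact B.zero_mem
  refine ⟨x, P, h, M₀, hxc, hxh, hxnt, hPd, hPx, ?_⟩
  intro v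
  have hdh : C.d (h v) = (Uu ^ M₀) • (v - τ v) - Pfun v • x := by
    show C.d (σ (β v)) = _
    rw [hσ]
    show L v = _
    exact hLv v
  have hhd : h (C.d v) = (Uu ^ M₀) • τ v := by
    show σ (β (C.d v)) = _
    have hβ : β (C.d v) = (Uu ^ M₀) • C.d.rangeRestrict v := by
      apply Subtype.ext
      show L (C.d v) = ((Uu ^ M₀) • C.d.rangeRestrict v : B)
      rw [hLv, hτd, sub_zero, hPd, zero_smul, sub_zero]
      rfl
    rw [hβ, map_smul]
    rfl
  rw [hdh, hhd]
  show (Uu ^ M₀) • v = Pfun v • x + ((Uu ^ M₀) • (v - τ v) - Pfun v • x) + (Uu ^ M₀) • τ v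
  rw [smul_sub]
  abel
lemma twoR : (2 : R) = 0 := by
  have := CharP.cast_eq_zero R 2
  simpa using this

lemma two_nsmul_V {k : ℕ} (w : V k) : (2 : ℕ) • w = 0 := by
  rw [two_smul]; exact addSelfV w

lemma two_zsmul_V {k : ℕ} (w : V k) : (2 : ℤ) • w = 0 := by
  rw [two_smul]; exact addSelfV w

lemma tvec_sub_left {m n : ℕ} (u u' : V m) (v : V n) :
    tvec (u - u') v = tvec u v - tvec u' v := by
  funext p; simp [tvec, sub_mul]

lemma tvec_sub_right {m n : ℕ} (u : V m) (v v' : V n) :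
    tvec u (v - v') = tvec u v - tvec u v' := by
  funext p; simp [tvec, mul_sub]

lemma zero_of_basis {m n : ℕ} {f : V m →ₗ[R] V n} (h : ∀ i, f (e i) = 0) :
    ∀ v, f v = 0 := by
  intro v
  rw [map_eq_sum f v]
  apply Finset.sum_eq_zero
  intro i _
  rw [h i, smul_zero]

lemma scal_zero_of_basis {m : ℕ} {f : V m →ₗ[R] R} (h : ∀ i, f (e i) = 0) :
    ∀ v, f v = 0 := by
  intro v
  rw [scal_eq_sum f v]
  apply Finset.sum_eq_zero
  intro i _
  rw [h i, mul_zero]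

/-- Tensor product of two linear functionals. -/
def smap {m n : ℕ} (P₁ : V m →ₗ[R] R) (P₂ : V n →ₗ[R] R) : V (m * n) →ₗ[R] R where
  toFun x := ∑ q : Fin (m * n),
    x q * (P₁ (e (finProdFinEquiv.symm q).1) * P₂ (e (finProdFinEquiv.symm q).2))
  map_add' x y := by
    simp [Pi.add_apply, add_mul, Finset.sum_add_distrib]
  map_smul' c x := by
    simp only [RingHom.id_apply, Pi.smul_apply, smul_eq_mul, Finset.mul_sum]
    exact Finset.sum_congr rfl fun q _ => by ring

lemma smap_tvec {m n : ℕ} (P₁ : V m →ₗ[R] R) (P₂ : V n →ₗ[R] R) (u : V m) (v : V n) :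
    smap P₁ P₂ (tvec u v) = P₁ u * P₂ v := by
  show (∑ q : Fin (m * n), _) = _
  rw [← Equiv.sum_comp (finProdFinEquiv : Fin m × Fin n ≃ Fin (m * n))]
  rw [Fintype.sum_prod_type]
  simp only [tvec, Equiv.symm_apply_apply]
  rw [scal_eq_sum P₁ u, scal_eq_sum P₂ v, Finset.sum_mul_sum]
  exact Finset.sum_congr rfl fun i _ => Finset.sum_congr rfl fun j _ => by ring

lemma Dtens_tvec (C₁ C₂ : PreCplx) {u : V C₁.n} {v : V C₂.n} :
    (tensorPre C₁ C₂).d (tvec u v) = tvec (C₁.d u) v + tvec u (C₂.d v) := by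
  show tmap C₁.d LinearMap.id (tvec u v) + tmap LinearMap.id C₂.d (tvec u v) = _
  rw [tmap_id_tvec', tmap_id_tvec]

lemma gradedMap_congr {m n : ℕ} {gr₁ : Fin m → ℤ} {gr₂ : Fin n → ℤ} {a b : ℤ}
    {f : V m →ₗ[R] V n} (h : GradedMap gr₁ gr₂ a f) (hab : a = b) :
    GradedMap gr₁ gr₂ b f := hab ▸ h
/-- The tensor differential, with explicitly typed identity maps. -/
def DT (C₁ C₂ : PreAI) : V (C₁.n * C₂.n) →ₗ[R] V (C₁.n * C₂.n) :=
  tmap C₁.d (LinearMap.id : V C₂.n →ₗ[R] V C₂.n) +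
    tmap (LinearMap.id : V C₁.n →ₗ[R] V C₁.n) C₂.d

lemma DT_eq (C₁ C₂ : PreAI) : (tensorPre C₁.toPreCplx C₂.toPreCplx).d = DT C₁ C₂ := rfl

lemma DT_tvec (C₁ C₂ : PreAI) (u : V C₁.n) (v : V C₂.n) :
    DT C₁ C₂ (tvec u v) = tvec (C₁.d u) v + tvec u (C₂.d v) := by
  rw [DT, LinearMap.add_apply, tmap_id_tvec', tmap_id_tvec]

lemma modU_chain (C₁ C₂ : PreAI)
    (hmod₁ : ∀ x, modU ((C₁.ι ∘ₗ C₁.d + C₁.d ∘ₗ C₁.ι) x))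
    (hmod₂ : ∀ x, modU ((C₂.ι ∘ₗ C₂.d + C₂.d ∘ₗ C₂.ι) x)) :
    ∀ xv : V (C₁.n * C₂.n),
      modU ((tmap C₁.ι C₂.ι ∘ₗ DT C₁ C₂ + DT C₁ C₂ ∘ₗ tmap C₁.ι C₂.ι) xv) := by
  apply modU_of_basis
  intro q
  rw [e_eq_tvec q]
  set u := e (finProdFinEquiv.symm q).1 with hu
  set v := e (finProdFinEquiv.symm q).2 with hv
  simp only [LinearMap.add_apply, LinearMap.comp_apply]
  have h1 : tmap C₁.ι C₂.ι (DT C₁ C₂ (tvec u v)) +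
      DT C₁ C₂ (tmap C₁.ι C₂.ι (tvec u v)) =
      tvec (C₁.ι (C₁.d u) + C₁.d (C₁.ι u)) (C₂.ι v) +
        tvec (C₁.ι u) (C₂.ι (C₂.d v) + C₂.d (C₂.ι v)) := by
    rw [DT_tvec, map_add, tmap_tvec, tmap_tvec, tmap_tvec, DT_tvec,
      tvec_add_left, tvec_add_right]
    abel
  rw [h1]
  exact modU_add (modU_tvec_left (by simpa using hmod₁ u) _)
    (modU_tvec_right _ (by simpa using hmod₂ v))
lemma homotopy_tensor (C₁ C₂ : PreAI)
    (hgι₂ : GradedMap C₂.gr C₂.gr 0 C₂.ι)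
    (hmod₂ : ∀ x, modU ((C₂.ι ∘ₗ C₂.d + C₂.d ∘ₗ C₂.ι) x))
    (hhom₁ : HomotopicModU C₁.toPreCplx C₁.toPreCplx (C₁.ι ∘ₗ C₁.ι) LinearMap.id)
    (hhom₂ : HomotopicModU C₂.toPreCplx C₂.toPreCplx (C₂.ι ∘ₗ C₂.ι) LinearMap.id) :
    HomotopicModU (tensorPre C₁.toPreCplx C₂.toPreCplx) (tensorPre C₁.toPreCplx C₂.toPreCplx)
      (tmap C₁.ι C₂.ι ∘ₗ tmap C₁.ι C₂.ι) LinearMap.id := by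
  obtain ⟨H₁, hgH₁, hE₁⟩ := hhom₁
  obtain ⟨H₂, hgH₂, hE₂⟩ := hhom₂
  refine ⟨((tmap H₁ (C₂.ι ∘ₗ C₂.ι) + tmap (LinearMap.id : V C₁.n →ₗ[R] V C₁.n) H₂ :
      V (C₁.n * C₂.n) →ₗ[R] V (C₁.n * C₂.n))), ?_, ?_⟩
  · apply gradedMap_add
    · exact gradedMap_congr
        (gradedMap_tmap hgH₁ (gradedMap_congr (gradedMap_comp hgι₂ hgι₂)
          (show (0:ℤ) + 0 = 0 by norm_num)))
        (show (1:ℤ) + 0 = 1 by norm_num)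
    · exact gradedMap_congr (gradedMap_tmap gradedMap_id hgH₂)
        (show (0:ℤ) + 1 = 1 by norm_num)
  · rw [DT_eq]
    apply modU_of_basis (m := C₁.n * C₂.n)
    intro q
    rw [e_eq_tvec q]
    set u := e (finProdFinEquiv.symm q).1 with hu
    set v := e (finProdFinEquiv.symm q).2 with hv
    show modU
      (tmap C₁.ι C₂.ι (tmap C₁.ι C₂.ι (tvec u v)) + tvec u v +
        (tmap H₁ (C₂.ι ∘ₗ C₂.ι) (DT C₁ C₂ (tvec u v)) +
          tmap (LinearMap.id : V C₁.n →ₗ[R] V C₁.n) H₂ (DT C₁ C₂ (tvec u v))) +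
        DT C₁ C₂ (tmap H₁ (C₂.ι ∘ₗ C₂.ι) (tvec u v) +
          tmap (LinearMap.id : V C₁.n →ₗ[R] V C₁.n) H₂ (tvec u v)))
    have key : tmap C₁.ι C₂.ι (tmap C₁.ι C₂.ι (tvec u v)) + tvec u v +
        (tmap H₁ (C₂.ι ∘ₗ C₂.ι) (DT C₁ C₂ (tvec u v)) +
          tmap LinearMap.id H₂ (DT C₁ C₂ (tvec u v))) +
        DT C₁ C₂ (tmap H₁ (C₂.ι ∘ₗ C₂.ι) (tvec u v) + tmap LinearMap.id H₂ (tvec u v)) =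
        tvec (C₁.ι (C₁.ι u) + u + H₁ (C₁.d u) + C₁.d (H₁ u)) (C₂.ι (C₂.ι v)) +
          tvec u (C₂.ι (C₂.ι v) + v + H₂ (C₂.d v) + C₂.d (H₂ v)) +
          tvec (H₁ u) (C₂.ι (C₂.ι (C₂.d v)) + C₂.d (C₂.ι (C₂.ι v))) := by
      simp only [map_add, DT_tvec, tmap_tvec, LinearMap.comp_apply, LinearMap.id_coe,
        id_eq, tvec_add_left, tvec_add_right]
      abel_nf
      simp only [two_nsmul_V, two_zsmul_V, add_zero, zero_add]
    rw [key]
    refine modU_add (modU_add ?_ ?_) ?_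
    · exact modU_tvec_left (by simpa using hE₁ u) _
    · exact modU_tvec_right _ (by simpa using hE₂ v)
    · refine modU_tvec_right _ ?_
      have h2 : C₂.ι (C₂.ι (C₂.d v)) + C₂.d (C₂.ι (C₂.ι v)) =
          C₂.ι (C₂.ι (C₂.d v) + C₂.d (C₂.ι v)) +
            (C₂.ι (C₂.d (C₂.ι v)) + C₂.d (C₂.ι (C₂.ι v))) := by
        rw [map_add]
        abel_nf
        simp only [two_nsmul_V, two_zsmul_V, add_zero, zero_add]
      rw [h2]
      exact modU_add (modU_map C₂.ι (by simpa using hmod₂ v)) (by simpa using hmod₂ (C₂.ι v))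
lemma tower_tensor (C₁ C₂ : PreAI) (hic₁ : IsCplx C₁.toPreCplx) (hic₂ : IsCplx C₂.toPreCplx)
    (ht₁ : HtowerCond C₁.toPreCplx) (ht₂ : HtowerCond C₂.toPreCplx) :
    HtowerCond (tensorPre C₁.toPreCplx C₂.toPreCplx) := by
  obtain ⟨x₁, P₁, hh₁, M₁, hx₁c, hx₁h, hx₁nt, hP₁d, hP₁x, hid₁⟩ := int_data _ hic₁ ht₁
  obtain ⟨x₂, P₂, hh₂, M₂, hx₂c, hx₂h, hx₂nt, hP₂d, hP₂x, hid₂⟩ := int_data _ hic₂ ht₂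
  set PT : V (C₁.n * C₂.n) →ₗ[R] R := smap P₁ P₂ with hPTe
  set π₁ : V C₁.n →ₗ[R] V C₁.n := LinearMap.toSpanSingleton R (V C₁.n) x₁ ∘ₗ P₁ with hπ₁e
  set hT : V (C₁.n * C₂.n) →ₗ[R] V (C₁.n * C₂.n) :=
    (Uu ^ M₂) • tmap hh₁ (LinearMap.id : V C₂.n →ₗ[R] V C₂.n) + tmap π₁ hh₂ with hTe
  have hs₁ : ∀ u, C₁.d (hh₁ u) = (Uu ^ M₁) • u - P₁ u • x₁ - hh₁ (C₁.d u) := by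
    intro u
    have h := hid₁ u
    rw [eq_sub_iff_add_eq, eq_sub_iff_add_eq, h]
    abel
  have hs₂ : ∀ v, C₂.d (hh₂ v) = (Uu ^ M₂) • v - P₂ v • x₂ - hh₂ (C₂.d v) := by
    intro v
    have h := hid₂ v
    rw [eq_sub_iff_add_eq, eq_sub_iff_add_eq, h]
    abel
  have hPTd : ∀ z, PT (DT C₁ C₂ z) = 0 := by
    have h0 : ∀ i, (PT ∘ₗ DT C₁ C₂) (e i) = 0 := by
      intro q
      rw [LinearMap.comp_apply, e_eq_tvec q, DT_tvec, map_add, hPTe, smap_tvec, smap_tvec,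
        hP₁d, hP₂d, zero_mul, mul_zero, add_zero]
    exact fun z => scal_zero_of_basis h0 z
  have hbasis : ∀ q : Fin (C₁.n * C₂.n), (Uu ^ (M₁ + M₂)) • (e q : V (C₁.n * C₂.n)) =
      PT (e q) • tvec x₁ x₂ + DT C₁ C₂ (hT (e q)) + hT (DT C₁ C₂ (e q)) := by
    intro q
    rw [e_eq_tvec q]
    set u := e (finProdFinEquiv.symm q).1 with hu
    set v := e (finProdFinEquiv.symm q).2 with hv
    rw [hTe, hPTe]
    simp only [LinearMap.add_apply, LinearMap.smul_apply, LinearMap.comp_apply,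
      tmap_tvec, DT_tvec, map_add, map_smul, smap_tvec, LinearMap.id_coe, id_eq,
      LinearMap.toSpanSingleton_apply, hπ₁e, tvec_add_left, tvec_add_right,
      tvec_smul_left, tvec_smul_right, smul_add, hx₁c, hP₁d, zero_smul, smul_zero,
      tvec_zero_left, add_zero, zero_add]
    rw [hs₁, hs₂]
    simp only [tvec_sub_left, tvec_sub_right, smul_sub, tvec_smul_left, tvec_smul_right]
    match_scalars <;> (try ring1) <;> (ring_nf; simp [twoR])
  have hmain : ∀ z : V (C₁.n * C₂.n), (Uu ^ (M₁ + M₂)) • z =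
      PT z • tvec x₁ x₂ + DT C₁ C₂ (hT z) + hT (DT C₁ C₂ z) := by
    intro z
    set A : V (C₁.n * C₂.n) →ₗ[R] V (C₁.n * C₂.n) :=
      LinearMap.toSpanSingleton R (V (C₁.n * C₂.n)) (tvec x₁ x₂) ∘ₗ PT +
        DT C₁ C₂ ∘ₗ hT + hT ∘ₗ DT C₁ C₂ with hAe
    have hf : ∀ i, ((Uu ^ (M₁ + M₂)) •
        (LinearMap.id : V (C₁.n * C₂.n) →ₗ[R] V (C₁.n * C₂.n)) - A) (e i) = 0 := by
      intro i
      rw [LinearMap.sub_apply, sub_eq_zero, LinearMap.smul_apply, LinearMap.id_coe, id_eq,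
        hAe]
      simp only [LinearMap.add_apply, LinearMap.comp_apply, LinearMap.toSpanSingleton_apply]
      exact hbasis i
    have := zero_of_basis hf z
    rw [LinearMap.sub_apply, sub_eq_zero, LinearMap.smul_apply, LinearMap.id_coe, id_eq,
      hAe] at this
    simp only [LinearMap.add_apply, LinearMap.comp_apply,
      LinearMap.toSpanSingleton_apply] at this
    exact this
  refine ⟨tvec x₁ x₂, ?_, ?_, ?_, ?_⟩
  · show (tensorPre C₁.toPreCplx C₂.toPreCplx).d (tvec x₁ x₂) = 0
    rw [Dtens_tvec, hx₁c, hx₂c, tvec_zero_left, tvec_zero_right, add_zero]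
    rfl
  · exact homog_congr (homog_tvec hx₁h hx₂h) (by norm_num)
  · rintro k ⟨z, hz⟩
    rw [DT_eq] at hz
    have hz' : DT C₁ C₂ (show V (C₁.n * C₂.n) from z) = (Uu ^ k) • tvec x₁ x₂ := hz
    have h1 := hPTd z
    rw [hz', map_smul, smap_tvec, hP₁x, hP₂x, smul_eq_mul] at h1
    have h2 : Uu ^ k * (Uu ^ M₁ * Uu ^ M₂) ≠ 0 := by
      apply mul_ne_zero (pow_ne_zero _ ?_) (mul_ne_zero (pow_ne_zero _ ?_) (pow_ne_zero _ ?_)) <;>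
        exact Polynomial.X_ne_zero
    exact h2 h1
  · intro y hy
    refine ⟨M₁ + M₂, PT y, hT y, ?_⟩
    have h1 := hmain y
    have hy0 : DT C₁ C₂ y = 0 := by
      rw [← DT_eq]
      exact hy
    rw [hy0, map_zero, add_zero] at h1
    rw [show (tensorPre C₁.toPreCplx C₂.toPreCplx).d = DT C₁ C₂ from rfl]
    exact h1
/-- the tensor product of two almost ι-complexes is an almost
ι-complex. -/
theorem tensor_isAICplx (C₁ C₂ : PreAI) (h₁ : IsAICplx C₁) (h₂ : IsAICplx C₂) :
    IsAICplx (tensorAI C₁ C₂) := by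
  obtain ⟨hic₁, hgι₁, hmod₁, hhom₁, ht₁⟩ := h₁
  obtain ⟨hic₂, hgι₂, hmod₂, hhom₂, ht₂⟩ := h₂
  have hgr₁ : GradedMap C₁.gr C₁.gr (-1) C₁.d := hic₁.1
  have hgr₂ : GradedMap C₂.gr C₂.gr (-1) C₂.d := hic₂.1
  have hddv₁ : ∀ u, C₁.d (C₁.d u) = 0 := fun u => LinearMap.ext_iff.mp hic₁.2 u
  have hddv₂ : ∀ u, C₂.d (C₂.d u) = 0 := fun u => LinearMap.ext_iff.mp hic₂.2 u
  refine ⟨⟨?_, ?_⟩, ?_, ?_, ?_, ?_⟩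
  · -- gradedness of the differential
    exact gradedMap_add (gradedMap_congr (gradedMap_tmap hgr₁ gradedMap_id) (by ring))
      (gradedMap_congr (gradedMap_tmap gradedMap_id hgr₂) (by ring))
  · -- d ∘ d = 0
    have hz : ∀ i : Fin (C₁.n * C₂.n), ((tensorPre C₁.toPreCplx C₂.toPreCplx).d ∘ₗ
        (tensorPre C₁.toPreCplx C₂.toPreCplx).d) (e i) = 0 := by
      intro q
      change DT C₁ C₂ (DT C₁ C₂ (e q)) = 0
      rw [e_eq_tvec q, DT_tvec, map_add, DT_tvec, DT_tvec,
        hddv₁, hddv₂, tvec_zero_left, tvec_zero_right, zero_add, add_zero, addSelfV]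
    apply LinearMap.ext
    intro v
    rw [LinearMap.zero_apply]
    exact zero_of_basis hz v
  · -- gradedness of ι ⊗ ι
    exact gradedMap_congr (gradedMap_tmap hgι₁ hgι₂) (by ring)
  · -- ι is a chain map mod U
    exact modU_chain C₁ C₂ hmod₁ hmod₂
  · -- (ι ⊗ ι)² ≃ id mod U
    exact homotopy_tensor C₁ C₂ hgι₂ hmod₂ hhom₁ hhom₂
  · -- the homology tower condition
    exact tower_tensor C₁ C₂ hic₁ hic₂ ht₁ ht₂

end AI
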